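/- Let D be a nonempty bounded open subset of ℝ^d and let p : (0,∞) × D × D → (0,∞) be such that for each t > 0 the function (x,y) ↦ p(t,x,y) is continuous and bounded on D × D, and p satisfies the Chapman–Kolmogorov (semigroup) property with respect to Lebesgue measure on D: p(s+t,x,y) = ∫_D p(s,x,z) p(t,z,y) dz for all s,t > 0 and x,y ∈ D. Let λ₀ ∈ ℝ and let φ, ψ : D → (0,∞) be bounded continuous functions satisfying, for all t > 0 and x,y ∈ D, ∫_D p(t,x,z) φ(z) dz = e^{λ₀ t} φ(x) and ∫_D p(t,z,y) ψ(z) dz = e^{λ₀ t} ψ(y). Assume intrinsic ultracontractivity holds: for every t > 0 there is c_t < ∞ with p(t,x,y) ≤ c_t φ(x) ψ(y) for all x,y ∈ D. Then for every t > 0 there exists C_t > 0 such that p(t,x,y) ≥ C_t φ(x) ψ(y) for all x,y ∈ D. -/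

import Mathlib

open MeasureTheory Set

/-- **Lower bound half of intrinsic ultracontractivity** (Theorem 3.8 of Kim–Song,
quoting Proposition 2.4 of [KS4]). If the strictly positive, bounded and continuous
transition kernel `p` on a nonempty bounded open set `D` satisfies Chapman–Kolmogorov,
`φ` resp. `ψ` are strictly positive bounded continuous eigenfunctions of the semigroup
resp. its dual with eigenvalue `e^{lam₀ t}`, and the intrinsic ultracontractivity upper
bound `p(t,x,y) ≤ c_t φ(x) ψ(y)` holds, then the matching lower bound
`p(t,x,y) ≥ C_t φ(x) ψ(y)` holds. -/
theorem intrinsic_ultracontractivity_lower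
    {d : ℕ} (D : Set (EuclideanSpace ℝ (Fin d)))
    (hne : D.Nonempty) (hopen : IsOpen D) (hbdd : Bornology.IsBounded D)
    (p : ℝ → EuclideanSpace ℝ (Fin d) → EuclideanSpace ℝ (Fin d) → ℝ)
    (hppos : ∀ t > (0:ℝ), ∀ x ∈ D, ∀ y ∈ D, 0 < p t x y)
    (hpcont : ∀ t > (0:ℝ),
      ContinuousOn (fun q : EuclideanSpace ℝ (Fin d) × EuclideanSpace ℝ (Fin d) =>
        p t q.1 q.2) (D ×ˢ D))
    (hpbdd : ∀ t > (0:ℝ), ∃ M : ℝ, ∀ x ∈ D, ∀ y ∈ D, p t x y ≤ M)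
    (hCK : ∀ s > (0:ℝ), ∀ t > (0:ℝ), ∀ x ∈ D, ∀ y ∈ D,
      p (s + t) x y = ∫ z in D, p s x z * p t z y)
    (lam₀ : ℝ) (φ ψ : EuclideanSpace ℝ (Fin d) → ℝ)
    (hφpos : ∀ x ∈ D, 0 < φ x) (hψpos : ∀ y ∈ D, 0 < ψ y)
    (hφbdd : ∃ M : ℝ, ∀ x ∈ D, φ x ≤ M) (hψbdd : ∃ M : ℝ, ∀ y ∈ D, ψ y ≤ M)
    (hφcont : ContinuousOn φ D) (hψcont : ContinuousOn ψ D)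
    (hφeig : ∀ t > (0:ℝ), ∀ x ∈ D, (∫ z in D, p t x z * φ z) = Real.exp (lam₀ * t) * φ x)
    (hψeig : ∀ t > (0:ℝ), ∀ y ∈ D, (∫ z in D, p t z y * ψ z) = Real.exp (lam₀ * t) * ψ y)
    (hIU : ∀ t > (0:ℝ), ∃ c : ℝ, ∀ x ∈ D, ∀ y ∈ D, p t x y ≤ c * (φ x * ψ y)) :
    ∀ t > (0:ℝ), ∃ C : ℝ, 0 < C ∧ ∀ x ∈ D, ∀ y ∈ D, C * (φ x * ψ y) ≤ p t x y := by
  intro t ht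
  have hD : MeasurableSet D := hopen.measurableSet
  have hvol : volume D < ⊤ := hbdd.measure_lt_top
  set s : ℝ := t / 3 with hs_def
  have hs : 0 < s := by positivity
  obtain ⟨x₀, hx₀⟩ := hne
  obtain ⟨c, hc⟩ := hIU s hs
  obtain ⟨Mp, hMp⟩ := hpbdd s hs
  obtain ⟨Mp₂, hMp₂⟩ := hpbdd (s + s) (by positivity)
  obtain ⟨Mφ, hMφ⟩ := hφbdd
  obtain ⟨Mψ, hMψ⟩ := hψbdd
  set M : ℝ := max Mφ Mψ with hM_def
  have hφM : ∀ x ∈ D, φ x ≤ M := fun x hx => (hMφ x hx).trans (le_max_left _ _)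
  have hψM : ∀ y ∈ D, ψ y ≤ M := fun y hy => (hMψ y hy).trans (le_max_right _ _)
  have hMpos : 0 < M := lt_of_lt_of_le (hφpos x₀ hx₀) (hφM _ hx₀)
  have hcpos : 0 < c := by
    nlinarith [hppos s hs x₀ hx₀ x₀ hx₀, hc x₀ hx₀ x₀ hx₀,
      mul_pos (hφpos x₀ hx₀) (hψpos x₀ hx₀)]
  set ε : ℝ := Real.exp (lam₀ * s) with hε_def
  have hεpos : 0 < ε := Real.exp_pos _
  set δ : ℝ := ε / (2 * c * M * M) with hδ_def
  have hδpos : 0 < δ := by positivity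
  -- a compact subset of D carrying most of the mass
  obtain ⟨K₁, hK₁D, hK₁c, hK₁m⟩ :=
    hD.exists_isCompact_lt_add hvol.ne (ε := ENNReal.ofReal δ)
      (by simp [ENNReal.ofReal_pos.mpr hδpos, (ENNReal.ofReal_pos.mpr hδpos).ne'])
  set K : Set (EuclideanSpace ℝ (Fin d)) := insert x₀ K₁ with hK_def
  have hK : IsCompact K := hK₁c.insert x₀
  have hKD : K ⊆ D := insert_subset hx₀ hK₁D
  have hKne : K.Nonempty := ⟨x₀, mem_insert _ _⟩
  have hKmeas : MeasurableSet K := hK.measurableSet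
  have hvolDK : (volume (D \ K)).toReal ≤ δ := by
    have h1 : volume (D \ K₁) ≤ ENNReal.ofReal δ := by
      rw [measure_diff hK₁D hK₁c.measurableSet.nullMeasurableSet hK₁c.measure_lt_top.ne]
      exact tsub_le_iff_right.mpr (by rw [add_comm]; exact hK₁m.le)
    have h2 : volume (D \ K) ≤ ENNReal.ofReal δ :=
      le_trans (measure_mono (diff_subset_diff_right (subset_insert _ _))) h1
    exact ENNReal.toReal_le_of_le_ofReal hδpos.le h2
  -- minimum of the kernel on K × K
  obtain ⟨q₀, hq₀, hq₀min⟩ := (hK.prod hK).exists_isMinOn (hKne.prod hKne)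
    ((hpcont s hs).mono (prod_mono hKD hKD))
  set m : ℝ := p s q₀.1 q₀.2 with hm_def
  have hmpos : 0 < m := hppos s hs _ (hKD hq₀.1) _ (hKD hq₀.2)
  have hm : ∀ z ∈ K, ∀ w ∈ K, m ≤ p s z w := by
    intro z hz w hw
    exact hq₀min (Set.mem_prod.mpr ⟨hz, hw⟩ : (z, w) ∈ K ×ˢ K)
  -- integrability helper
  have hint : ∀ f : EuclideanSpace ℝ (Fin d) → ℝ, ContinuousOn f D →
      ∀ B : ℝ, (∀ z ∈ D, |f z| ≤ B) → IntegrableOn f D volume := by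
    intro f hf B hB
    refine ⟨hf.aestronglyMeasurable hD, HasFiniteIntegral.restrict_of_bounded (C := B) hvol ?_⟩
    filter_upwards [ae_restrict_mem hD] with z hz
    simpa [Real.norm_eq_abs] using hB z hz
  -- sectional continuity
  have hpx : ∀ x ∈ D, ContinuousOn (fun z => p s x z) D := by
    intro x hx
    exact (hpcont s hs).comp
      ((continuous_const.prodMk continuous_id).continuousOn) (fun z hz => ⟨hx, hz⟩)
  have hpy : ∀ y ∈ D, ContinuousOn (fun z => p s z y) D := by
    intro y hy
    exact (hpcont s hs).comp
      ((continuous_id.prodMk continuous_const).continuousOn) (fun z hz => ⟨hz, hy⟩)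
  have hpy2 : ∀ y ∈ D, ContinuousOn (fun z => p (s + s) z y) D := by
    intro y hy
    exact (hpcont (s + s) (by positivity)).comp
      ((continuous_id.prodMk continuous_const).continuousOn) (fun z hz => ⟨hz, hy⟩)
  have habs : ∀ a B : ℝ, 0 ≤ a → a ≤ B → |a| ≤ B := by
    intro a B h1 h2; rwa [abs_of_nonneg h1]
  -- key tail estimate template: if g is the kernel times eigenfunction, then
  -- the integral over K is at least half of the integral over D.
  -- Claim A: lower bound for ∫_K p s x z dz
  have claimA : ∀ x ∈ D, ε * φ x / 2 ≤ M * ∫ z in K, p s x z := by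
    intro x hx
    set g : EuclideanSpace ℝ (Fin d) → ℝ := fun z => p s x z * φ z with hg_def
    have hgint : IntegrableOn g D volume := by
      refine hint g ((hpx x hx).mul hφcont) (Mp * M) ?_
      intro z hz
      exact habs _ _ (mul_nonneg (hppos s hs x hx z hz).le (hφpos z hz).le)
        (mul_le_mul (hMp x hx z hz) (hφM z hz) (hφpos z hz).le
          ((hppos s hs x hx x hx).le.trans (hMp x hx x hx)))
    have htail : ∫ z in D \ K, g z ≤ ε * φ x / 2 := by
      have hb : ∀ z ∈ D \ K, g z ≤ c * M * M * φ x := by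
        intro z hz
        have hzD := hz.1
        have h1 : p s x z ≤ c * (φ x * ψ z) := hc x hx z hzD
        have h2 : ψ z ≤ M := hψM z hzD
        have h3 : φ z ≤ M := hφM z hzD
        have h5 : ψ z * φ z ≤ M * M :=
          mul_le_mul h2 h3 (hφpos z hzD).le hMpos.le
        calc p s x z * φ z ≤ c * (φ x * ψ z) * φ z :=
              mul_le_mul_of_nonneg_right h1 (hφpos z hzD).le
          _ = c * φ x * (ψ z * φ z) := by ring
          _ ≤ c * φ x * (M * M) := by
              apply mul_le_mul_of_nonneg_left h5
              have := hφpos x hx; positivity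
          _ = c * M * M * φ x := by ring
      calc ∫ z in D \ K, g z ≤ ∫ _z in D \ K, c * M * M * φ x :=
            setIntegral_mono_on (hgint.mono_set diff_subset)
              ((integrableOn_const_iff).mpr (Or.inr ((measure_mono diff_subset).trans_lt hvol)))
              (hD.diff hKmeas) hb
        _ = (volume (D \ K)).toReal * (c * M * M * φ x) := by
            rw [setIntegral_const]; simp [smul_eq_mul, measureReal_def]
        _ ≤ δ * (c * M * M * φ x) := by
            apply mul_le_mul_of_nonneg_right hvolDK
            have := hφpos x hx; positivity
        _ = ε * φ x / 2 := by
            rw [hδ_def]; field_simp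
    have hdiff : ∫ z in D \ K, g z = (∫ z in D, g z) - ∫ z in K, g z :=
      integral_diff hKmeas hgint hKD
    have hDg : ∫ z in D, g z = ε * φ x := hφeig s hs x hx
    have hKg : ε * φ x / 2 ≤ ∫ z in K, g z := by
      have := htail; rw [hdiff, hDg] at this; linarith
    have hcomp : ∫ z in K, g z ≤ ∫ z in K, M * p s x z := by
      refine setIntegral_mono_on (hgint.mono_set hKD) ?_ hKmeas ?_
      · refine ((hint (fun z => p s x z) (hpx x hx) Mp ?_).mono_set hKD).const_mul M
        intro z hz; exact habs _ _ (hppos s hs x hx z hz).le (hMp x hx z hz)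
      · intro z hz
        have hzD := hKD hz
        calc p s x z * φ z ≤ p s x z * M :=
              mul_le_mul_of_nonneg_left (hφM z hzD) (hppos s hs x hx z hzD).le
          _ = M * p s x z := mul_comm _ _
    calc ε * φ x / 2 ≤ ∫ z in K, g z := hKg
      _ ≤ ∫ z in K, M * p s x z := hcomp
      _ = M * ∫ z in K, p s x z := integral_const_mul M _
  -- Claim B: lower bound for ∫_K p s w y dw
  have claimB : ∀ y ∈ D, ε * ψ y / 2 ≤ M * ∫ w in K, p s w y := by
    intro y hy
    set g : EuclideanSpace ℝ (Fin d) → ℝ := fun w => p s w y * ψ w with hg_def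
    have hgint : IntegrableOn g D volume := by
      refine hint g ((hpy y hy).mul hψcont) (Mp * M) ?_
      intro z hz
      exact habs _ _ (mul_nonneg (hppos s hs z hz y hy).le (hψpos z hz).le)
        (mul_le_mul (hMp z hz y hy) (hψM z hz) (hψpos z hz).le
          ((hppos s hs y hy y hy).le.trans (hMp y hy y hy)))
    have htail : ∫ z in D \ K, g z ≤ ε * ψ y / 2 := by
      have hb : ∀ z ∈ D \ K, g z ≤ c * M * M * ψ y := by
        intro z hz
        have hzD := hz.1
        have h1 : p s z y ≤ c * (φ z * ψ y) := hc z hzD y hy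
        have h2 : ψ z ≤ M := hψM z hzD
        have h3 : φ z ≤ M := hφM z hzD
        have h5 : ψ z * φ z ≤ M * M :=
          mul_le_mul h2 h3 (hφpos z hzD).le hMpos.le
        calc p s z y * ψ z ≤ c * (φ z * ψ y) * ψ z :=
              mul_le_mul_of_nonneg_right h1 (hψpos z hzD).le
          _ = c * ψ y * (ψ z * φ z) := by ring
          _ ≤ c * ψ y * (M * M) := by
              apply mul_le_mul_of_nonneg_left h5
              have := hψpos y hy; positivity
          _ = c * M * M * ψ y := by ring
      calc ∫ z in D \ K, g z ≤ ∫ _z in D \ K, c * M * M * ψ y :=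
            setIntegral_mono_on (hgint.mono_set diff_subset)
              ((integrableOn_const_iff).mpr (Or.inr ((measure_mono diff_subset).trans_lt hvol)))
              (hD.diff hKmeas) hb
        _ = (volume (D \ K)).toReal * (c * M * M * ψ y) := by
            rw [setIntegral_const]; simp [smul_eq_mul, measureReal_def]
        _ ≤ δ * (c * M * M * ψ y) := by
            apply mul_le_mul_of_nonneg_right hvolDK
            have := hψpos y hy; positivity
        _ = ε * ψ y / 2 := by
            rw [hδ_def]; field_simp
    have hdiff : ∫ z in D \ K, g z = (∫ z in D, g z) - ∫ z in K, g z :=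
      integral_diff hKmeas hgint hKD
    have hDg : ∫ z in D, g z = ε * ψ y := hψeig s hs y hy
    have hKg : ε * ψ y / 2 ≤ ∫ z in K, g z := by
      have := htail; rw [hdiff, hDg] at this; linarith
    have hcomp : ∫ z in K, g z ≤ ∫ z in K, M * p s z y := by
      refine setIntegral_mono_on (hgint.mono_set hKD) ?_ hKmeas ?_
      · refine ((hint (fun z => p s z y) (hpy y hy) Mp ?_).mono_set hKD).const_mul M
        intro z hz; exact habs _ _ (hppos s hs z hz y hy).le (hMp z hz y hy)
      · intro z hz
        have hzD := hKD hz
        calc p s z y * ψ z ≤ p s z y * M :=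
              mul_le_mul_of_nonneg_left (hψM z hzD) (hppos s hs z hzD y hy).le
          _ = M * p s z y := mul_comm _ _
    calc ε * ψ y / 2 ≤ ∫ z in K, g z := hKg
      _ ≤ ∫ z in K, M * p s z y := hcomp
      _ = M * ∫ z in K, p s z y := integral_const_mul M _
  -- Claim C: lower bound for p (s+s) z y when z ∈ K
  have claimC : ∀ z ∈ K, ∀ y ∈ D, m * (∫ w in K, p s w y) ≤ p (s + s) z y := by
    intro z hz y hy
    have hzD := hKD hz
    have hprod_int : IntegrableOn (fun w => p s z w * p s w y) D volume := by
      refine hint _ ((hpx z hzD).mul (hpy y hy)) (Mp * Mp) ?_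
      intro w hw
      exact habs _ _ (mul_nonneg (hppos s hs z hzD w hw).le (hppos s hs w hw y hy).le)
        (mul_le_mul (hMp z hzD w hw) (hMp w hw y hy) (hppos s hs w hw y hy).le
          ((hppos s hs z hzD z hzD).le.trans (hMp z hzD z hzD)))
    have hCKeq : p (s + s) z y = ∫ w in D, p s z w * p s w y :=
      hCK s hs s hs z hzD y hy
    have h1 : ∫ w in K, p s z w * p s w y ≤ ∫ w in D, p s z w * p s w y := by
      refine setIntegral_mono_set hprod_int ?_ hKD.eventuallyLE
      filter_upwards [ae_restrict_mem hD] with w hw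
      exact mul_nonneg (hppos s hs z hzD w hw).le (hppos s hs w hw y hy).le
    have h2 : ∫ w in K, m * p s w y ≤ ∫ w in K, p s z w * p s w y := by
      refine setIntegral_mono_on ?_ (hprod_int.mono_set hKD) hKmeas ?_
      · refine ((hint (fun w => p s w y) (hpy y hy) Mp ?_).mono_set hKD).const_mul m
        intro w hw; exact habs _ _ (hppos s hs w hw y hy).le (hMp w hw y hy)
      · intro w hw
        exact mul_le_mul_of_nonneg_right (hm z hz w hw) (hppos s hs w (hKD hw) y hy).le
    rw [hCKeq]
    calc m * ∫ w in K, p s w y = ∫ w in K, m * p s w y := (integral_const_mul m _).symm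
      _ ≤ ∫ w in K, p s z w * p s w y := h2
      _ ≤ ∫ w in D, p s z w * p s w y := h1
  -- conclusion
  refine ⟨m * ε * ε / (4 * M * M), by positivity, ?_⟩
  intro x hx y hy
  set A : ℝ := ∫ z in K, p s x z with hA_def
  set B : ℝ := ∫ w in K, p s w y with hB_def
  have hA : ε * φ x / 2 ≤ M * A := claimA x hx
  have hB : ε * ψ y / 2 ≤ M * B := claimB y hy
  have hApos : 0 < A := by nlinarith [hεpos, hφpos x hx, hMpos]
  have hBpos : 0 < B := by nlinarith [hεpos, hψpos y hy, hMpos]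
  have hts : t = s + (s + s) := by rw [hs_def]; ring
  have hCKeq : p t x y = ∫ z in D, p s x z * p (s + s) z y := by
    rw [hts]; exact hCK s hs (s + s) (by positivity) x hx y hy
  have hint2 : IntegrableOn (fun z => p s x z * p (s + s) z y) D volume := by
    refine hint _ ((hpx x hx).mul (hpy2 y hy)) (Mp * Mp₂) ?_
    intro z hz
    exact habs _ _
      (mul_nonneg (hppos s hs x hx z hz).le (hppos (s + s) (by positivity) z hz y hy).le)
      (mul_le_mul (hMp x hx z hz) (hMp₂ z hz y hy)
        (hppos (s + s) (by positivity) z hz y hy).le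
        ((hppos s hs x hx x hx).le.trans (hMp x hx x hx)))
  have h1 : ∫ z in K, p s x z * p (s + s) z y ≤ ∫ z in D, p s x z * p (s + s) z y := by
    refine setIntegral_mono_set hint2 ?_ hKD.eventuallyLE
    filter_upwards [ae_restrict_mem hD] with z hz
    exact mul_nonneg (hppos s hs x hx z hz).le (hppos (s + s) (by positivity) z hz y hy).le
  have h2 : ∫ z in K, p s x z * (m * B) ≤ ∫ z in K, p s x z * p (s + s) z y := by
    refine setIntegral_mono_on ?_ (hint2.mono_set hKD) hKmeas ?_
    · refine ((hint (fun z => p s x z) (hpx x hx) Mp ?_).mono_set hKD).mul_const (m * B)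
      intro z hz; exact habs _ _ (hppos s hs x hx z hz).le (hMp x hx z hz)
    · intro z hz
      exact mul_le_mul_of_nonneg_left (claimC z hz y hy) (hppos s hs x hx z (hKD hz)).le
  have h3 : A * (m * B) ≤ p t x y := by
    rw [hCKeq]
    calc A * (m * B) = ∫ z in K, p s x z * (m * B) := (integral_mul_const _ _).symm
      _ ≤ ∫ z in K, p s x z * p (s + s) z y := h2
      _ ≤ ∫ z in D, p s x z * p (s + s) z y := h1
  have haA : ε * φ x / (2 * M) ≤ A := by
    rw [div_le_iff₀ (by positivity)]; linarith
  have hbB : ε * ψ y / (2 * M) ≤ B := by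
    rw [div_le_iff₀ (by positivity)]; linarith
  have hab : (ε * φ x / (2 * M)) * (ε * ψ y / (2 * M)) ≤ A * B := by
    refine mul_le_mul haA hbB ?_ hApos.le
    have := hψpos y hy; positivity
  have hfinal : m * ε * ε / (4 * M * M) * (φ x * ψ y) ≤ A * (m * B) := by
    have heq : m * ε * ε / (4 * M * M) * (φ x * ψ y)
        = m * ((ε * φ x / (2 * M)) * (ε * ψ y / (2 * M))) := by
      field_simp; ring
    calc m * ε * ε / (4 * M * M) * (φ x * ψ y)
        = m * ((ε * φ x / (2 * M)) * (ε * ψ y / (2 * M))) := heq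
      _ ≤ m * (A * B) := mul_le_mul_of_nonneg_left hab hmpos.le
      _ = A * (m * B) := by ring
  linarith
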